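/- Let F be an algebraically closed field of characteristic 0 and k ≥ 2 an integer. Let J_{0,n} be the n×n nilpotent Jordan block. Then for every C ∈ M_n(F) there exist X₁, X₂ ∈ M_n(F) with C = X₁^k + J_{0,n}·X₂^k. -/

import Mathlib

/-- The nilpotent Jordan block of size `m`. -/
def jordanBlockZero (F : Type*) [Zero F] [One F] (m : ℕ) :
    Matrix (Fin m) (Fin m) F :=
  Matrix.of fun i j => if (i : ℕ) + 1 = (j : ℕ) then 1 else 0

open Polynomial Matrix

section Aux

variable {F : Type*} [Field F]


lemma coprime_X_sub_C_of_eval_ne {q : F[X]} {l : F} (h : q.eval l ≠ 0) :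
    IsCoprime (X - C l) q := by
  rw [(irreducible_X_sub_C l).coprime_iff_not_dvd]
  intro hd
  exact h ((dvd_iff_isRoot).mp hd)

lemma prod_X_sub_C_dvd_of_eval_eq_zero {s : Finset F} {g : F[X]}
    (h : ∀ l ∈ s, g.eval l = 0) : (∏ l ∈ s, (X - C l)) ∣ g := by
  refine Finset.prod_dvd_of_coprime ?_ fun l hl => (dvd_iff_isRoot).mpr (h l hl)
  exact (pairwise_coprime_X_sub_C Function.injective_id).set_pairwise _

lemma eval_prod_X_sub_C_self {s : Finset F} {l : F} (hl : l ∈ s) :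
    (∏ x ∈ s, (X - C x)).eval l = 0 := by
  rw [eval_prod]
  exact Finset.prod_eq_zero hl (by simp)

lemma bsq {R : Type*} [CommRing R] (a b : R) : ∀ m : ℕ,
    b ^ 2 ∣ (a + b) ^ (m + 1) - a ^ (m + 1) - (m + 1 : ℕ) * a ^ m * b := by
  intro m
  induction m with
  | zero => exact ⟨0, by push_cast; ring⟩
  | succ m ih =>
    obtain ⟨c, hc⟩ := ih
    exact ⟨a * c + (m + 1 : ℕ) * a ^ m + b * c, by push_cast at hc ⊢; linear_combination (a + b) * hc⟩

/-- Hensel lifting: a polynomial `p` with `r^(M+1) ∣ p^k - X`, where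
`r = ∏_{l ∈ s} (X - l)` with all `l ≠ 0`. -/
lemma hensel [IsAlgClosed F] [CharZero F] (k : ℕ) (hk : 2 ≤ k)
    (s : Finset F) (hs : ∀ l ∈ s, l ≠ 0) (M : ℕ) :
    ∃ p : F[X], (∀ l ∈ s, p.eval l ≠ 0) ∧ (∏ l ∈ s, (X - C l)) ^ (M + 1) ∣ p ^ k - X := by
  classical
  set r : F[X] := ∏ l ∈ s, (X - C l) with hr
  induction M with
  | zero =>
    have hkpos : 0 < k := by omega
    choose μ hμ using fun l : F => IsAlgClosed.exists_pow_nat_eq l hkpos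
    refine ⟨Lagrange.interpolate s id μ, ?_, ?_⟩
    · intro l hl
      have hnode := Lagrange.eval_interpolate_at_node (v := id) (r := μ) (Set.injOn_id _) hl
      simp only [id_eq] at hnode
      rw [hnode]
      intro h0
      exact hs l hl (by rw [← hμ l, h0, zero_pow (by omega)])
    · rw [pow_one]
      refine prod_X_sub_C_dvd_of_eval_eq_zero fun l hl => ?_
      have hnode := Lagrange.eval_interpolate_at_node (v := id) (r := μ) (Set.injOn_id _) hl
      simp only [id_eq] at hnode
      rw [eval_sub, eval_pow, hnode, hμ l, eval_X, sub_self]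
  | succ M ih =>
    obtain ⟨p, hev, hdvd⟩ := ih
    obtain ⟨g, hg⟩ := hdvd
    have hco : IsCoprime r ((k : F[X]) * p ^ (k - 1)) := by
      refine IsCoprime.prod_left fun l hl => coprime_X_sub_C_of_eval_ne ?_
      have h1 : ((k : F[X]) * p ^ (k - 1)).eval l = (k : F) * (p.eval l) ^ (k - 1) := by
        simp
      rw [h1]
      exact mul_ne_zero (Nat.cast_ne_zero.mpr (by omega)) (pow_ne_zero _ (hev l hl))
    obtain ⟨u, v, huv⟩ := hco
    set q : F[X] := -(v * g * r ^ (M + 1)) with hq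
    refine ⟨p + q, ?_, ?_⟩
    · intro l hl
      have h0 : r.eval l = 0 := eval_prod_X_sub_C_self hl
      simpa [hq, h0, zero_pow (Nat.succ_ne_zero M)] using hev l hl
    · obtain ⟨w, hw⟩ := bsq p q (k - 1)
      rw [(by omega : k - 1 + 1 = k)] at hw
      refine ⟨g * u + v ^ 2 * g ^ 2 * r ^ M * w, ?_⟩
      linear_combination hw + hg - (r ^ (M + 1) * g) * huv

/-- A square matrix annihilated by a squarefree split polynomial has a k-th root. -/
lemma root_of_annihilator [IsAlgClosed F] {N : Type*} [Fintype N] [DecidableEq N]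
    (k : ℕ) (hk : 2 ≤ k) (s : Finset F) (A : Matrix N N F)
    (hA : aeval A (∏ l ∈ s, (X - C l)) = 0) : ∃ B, B ^ k = A := by
  classical
  have hkpos : 0 < k := by omega
  choose μ hμ using fun l : F => IsAlgClosed.exists_pow_nat_eq l hkpos
  set p := Lagrange.interpolate s id μ with hp
  have hdvd : (∏ l ∈ s, (X - C l)) ∣ p ^ k - X := by
    refine prod_X_sub_C_dvd_of_eval_eq_zero fun l hl => ?_
    have hnode := Lagrange.eval_interpolate_at_node (v := id) (r := μ) (Set.injOn_id _) hl
    simp only [id_eq] at hnode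
    rw [eval_sub, eval_pow, hp, hnode, hμ l, eval_X, sub_self]
  obtain ⟨w, hw⟩ := hdvd
  refine ⟨aeval A p, ?_⟩
  have := congrArg (aeval A) hw
  rw [map_sub, map_pow, aeval_X, _root_.map_mul, hA, zero_mul, sub_eq_zero] at this
  exact this

/-- An invertible matrix over an algebraically closed field of characteristic zero
has a k-th root. -/
lemma pow_of_isUnit [IsAlgClosed F] [CharZero F] {N : Type*} [Fintype N] [DecidableEq N]
    (k : ℕ) (hk : 2 ≤ k) (A : Matrix N N F) (hA : A.det ≠ 0) : ∃ B, B ^ k = A := by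
  classical
  set h := A.charpoly with hh
  have hsp : h.Splits := IsAlgClosed.splits h
  set s := h.roots.toFinset with hs
  have hroots0 : ∀ l ∈ s, l ≠ 0 := by
    intro l hl hl0
    apply hA
    rw [Matrix.det_eq_prod_roots_charpoly_of_splits hsp]
    refine Multiset.prod_eq_zero ?_
    have : l ∈ A.charpoly.roots := Multiset.mem_toFinset.mp hl
    rw [hl0] at this
    exact this
  set d := h.roots.card with hd
  have hdiv : h ∣ (∏ l ∈ s, (X - C l)) ^ (d + 1) := by
    have h1 : h = (h.roots.map fun a => X - C a).prod :=
      hsp.eq_prod_roots_of_monic (Matrix.charpoly_monic A)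
    rw [h1, Finset.prod_multiset_map_count]
    rw [← Finset.prod_pow]
    refine Finset.prod_dvd_prod_of_dvd _ _ fun l hl => ?_
    exact pow_dvd_pow _ (le_trans (Multiset.count_le_card _ _) (by omega))
  obtain ⟨p, _, hdvd⟩ := hensel k hk s hroots0 d
  obtain ⟨w, hw⟩ := dvd_trans hdiv hdvd
  refine ⟨aeval A p, ?_⟩
  have := congrArg (aeval A) hw
  rw [map_sub, map_pow, aeval_X, _root_.map_mul, hh, Matrix.aeval_self_charpoly, zero_mul,
    sub_eq_zero] at this
  exact this

lemma eval_charpoly_eq {N : Type*} [Fintype N] [DecidableEq N] (M : Matrix N N F) (t : F) :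
    (Matrix.charpoly M).eval t = (t • (1 : Matrix N N F) - M).det := by
  rw [Matrix.charpoly, ← Polynomial.coe_evalRingHom, RingHom.map_det]
  congr 1
  ext i j
  by_cases h : i = j
  · subst h; simp [Matrix.charmatrix_apply_eq, Matrix.one_apply]
  · simp [Matrix.charmatrix_apply_ne _ _ _ h, Matrix.one_apply, h]

end Aux

/-- For every `C ∈ M_n(F)` and `k ≥ 2`, the equation `C = X₁^k + J_{0,n} X₂^k`
admits a solution. -/
theorem stmt_6 {F : Type*} [Field F] [IsAlgClosed F] [CharZero F] {n : ℕ}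
    (k : ℕ) (hk : 2 ≤ k) (C : Matrix (Fin n) (Fin n) F) :
    ∃ X₁ X₂ : Matrix (Fin n) (Fin n) F,
      C = X₁ ^ k + jordanBlockZero F n * X₂ ^ k := by
  classical
  rcases Nat.eq_zero_or_pos n with h0 | hpos
  · subst h0
    exact ⟨0, 0, by ext i j; exact i.elim0⟩
  obtain ⟨m, rfl⟩ := Nat.exists_eq_succ_of_ne_zero (by omega : n ≠ 0)
  set L : Fin (m + 1) := Fin.last m with hL
  set D : Matrix (Fin m) (Fin m) F := Matrix.of fun i j => C i.castSucc j.castSucc with hD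
  -- choose t
  have hcne : Matrix.charpoly D ≠ 0 := (Matrix.charpoly_monic D).ne_zero
  obtain ⟨t, ht⟩ := Infinite.exists_notMem_finset
    (insert (C L L) (Matrix.charpoly D).roots.toFinset)
  have htne : t ≠ C L L := fun h => ht (h ▸ Finset.mem_insert_self _ _)
  have hteval : (Matrix.charpoly D).eval t ≠ 0 := by
    intro h
    exact ht (Finset.mem_insert_of_mem (Multiset.mem_toFinset.mpr
      ((Polynomial.mem_roots hcne).mpr h)))
  -- the two matrices
  set A : Matrix (Fin (m + 1)) (Fin (m + 1)) F :=
    Matrix.of fun i j => if i = L then C L j else if i = j then t else 0 with hA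
  set Y : Matrix (Fin (m + 1)) (Fin (m + 1)) F :=
    Matrix.of fun i => Fin.cases (motive := fun _ => Fin (m + 1) → F)
      (fun j => if j = L then (1 : F) else 0)
      (fun i0 j => C i0.castSucc j - if i0.castSucc = j then t else 0) i with hYdef
  have hY0 : ∀ j, Y 0 j = if j = L then (1 : F) else 0 := fun j => by
    simp [hYdef]
  have hYs : ∀ (i0 : Fin m) (j : Fin (m + 1)),
      Y i0.succ j = C i0.castSucc j - if i0.castSucc = j then t else 0 := fun i0 j => by
    simp [hYdef]
  -- A is a k-th power
  have hfac : (A - t • 1) * (A - C L L • 1) = 0 := by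
    ext i j
    rw [Matrix.mul_apply, Matrix.zero_apply]
    by_cases hi : i = L
    · subst hi
      have he1 : ∀ l, (A - t • 1) L l = C L l - (if L = l then t else 0) := by
        intro l
        by_cases h : L = l
        · subst h
          simp [hA, Matrix.sub_apply, Matrix.smul_apply, Matrix.one_apply]
        · simp [hA, Matrix.sub_apply, Matrix.smul_apply, Matrix.one_apply, h]
      have he2c : ∀ (l0 : Fin m) (j : Fin (m + 1)), (A - C L L • 1) l0.castSucc j
          = if l0.castSucc = j then t - C L L else 0 := by
        intro l0 j
        by_cases h : l0.castSucc = j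
        · subst h
          simp [hA, hL, Matrix.sub_apply, Matrix.smul_apply, Matrix.one_apply,
            (Fin.castSucc_lt_last l0).ne]
        · simp [hA, hL, Matrix.sub_apply, Matrix.smul_apply, Matrix.one_apply,
            (Fin.castSucc_lt_last l0).ne, h]
      have he2L : ∀ j, (A - C L L • 1) L j = C L j - (if L = j then C L L else 0) := by
        intro j
        by_cases h : L = j
        · subst h
          simp [hA, Matrix.sub_apply, Matrix.smul_apply, Matrix.one_apply]
        · simp [hA, Matrix.sub_apply, Matrix.smul_apply, Matrix.one_apply, h]
      rw [Fin.sum_univ_castSucc, ← hL]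
      simp only [he1, he2c, he2L, if_pos rfl]
      have hnotL : ∀ l0 : Fin m, (L = l0.castSucc) = False := fun l0 => by
        simp [hL, (Fin.castSucc_lt_last l0).ne']
      simp only [hnotL, if_false, sub_zero]
      by_cases hj : j = L
      · subst hj
        have : ∀ l0 : Fin m, (l0.castSucc = L) = False := fun l0 => by
          simp [hL, (Fin.castSucc_lt_last l0).ne]
        simp only [this, if_false, mul_zero, Finset.sum_const_zero, if_pos rfl]
        simp [hL, hA]
      · obtain ⟨j0, rfl⟩ := Fin.exists_castSucc_eq.2 hj
        have hLj : (L = j0.castSucc) = False := by simp [hL, (Fin.castSucc_lt_last j0).ne']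
        simp only [hLj, if_false, sub_zero, mul_ite, mul_sub, mul_zero, Fin.castSucc_inj]
        rw [Finset.sum_ite_eq' Finset.univ j0]
        simp only [Finset.mem_univ, if_true]
        ring
    · refine Finset.sum_eq_zero fun l _ => ?_
      have hz : (A - t • 1) i l = 0 := by
        by_cases hil : i = l
        · subst hil
          simp [hA, Matrix.sub_apply, Matrix.smul_apply, Matrix.one_apply, hi]
        · simp [hA, Matrix.sub_apply, Matrix.smul_apply, Matrix.one_apply, hi, hil]
      rw [hz, zero_mul]
  have hann : Polynomial.aeval A
      (∏ l ∈ ({t, C L L} : Finset F), (Polynomial.X - Polynomial.C l)) = 0 := by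
    rw [Finset.prod_pair htne, _root_.map_mul, map_sub, map_sub, Polynomial.aeval_X,
      Polynomial.aeval_C, Polynomial.aeval_C, Algebra.algebraMap_eq_smul_one,
      Algebra.algebraMap_eq_smul_one]
    exact hfac
  obtain ⟨X₁, hX₁⟩ := root_of_annihilator k hk _ A hann
  -- Y is a k-th power
  have hsub : Y.submatrix Fin.succ Fin.castSucc = D - t • 1 := by
    ext i j
    simp [hYs, hD, Matrix.sub_apply, Matrix.smul_apply, Matrix.one_apply, Fin.castSucc_inj]
  have hdet : Y.det = (-1) ^ (m : ℕ) * (D - t • 1).det := by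
    rw [Matrix.det_succ_row_zero, Finset.sum_eq_single L]
    · rw [hY0 L, if_pos rfl, Fin.succAbove_last, hsub]
      simp [hL]
    · intro b _ hb
      rw [hY0 b, if_neg hb, mul_zero, zero_mul]
    · intro hb
      exact absurd (Finset.mem_univ L) hb
  have hYdet : Y.det ≠ 0 := by
    rw [hdet]
    refine mul_ne_zero (pow_ne_zero _ (by norm_num)) ?_
    intro h0
    apply hteval
    rw [eval_charpoly_eq]
    rw [(neg_sub _ _).symm, Matrix.det_neg, h0, mul_zero]
  obtain ⟨X₂, hX₂⟩ := pow_of_isUnit k hk Y hYdet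
  -- assembly
  refine ⟨X₁, X₂, ?_⟩
  rw [hX₁, hX₂]
  ext i j
  rw [Matrix.add_apply, Matrix.mul_apply]
  induction i using Fin.lastCases with
  | last =>
    have hAe : A L j = C L j := by simp [hA]
    have hsum : ∀ l : Fin (m + 1), jordanBlockZero F (m + 1) L l * Y l j = 0 := by
      intro l
      have : ((L : Fin (m+1)) : ℕ) + 1 ≠ (l : ℕ) := by
        have := l.is_lt; simp [hL]; omega
      simp [jordanBlockZero, this]
    rw [Finset.sum_eq_zero fun l _ => hsum l, hAe, add_zero]
  | cast i0 =>
    have hAe : A i0.castSucc j = if i0.castSucc = j then t else 0 := by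
      simp [hA, hL, (Fin.castSucc_lt_last i0).ne]
    rw [Finset.sum_eq_single i0.succ, hAe]
    · rw [hYs i0 j]
      have hJ : jordanBlockZero F (m + 1) i0.castSucc i0.succ = 1 := by
        simp [jordanBlockZero]
      rw [hJ, one_mul]
      by_cases h : i0.castSucc = j <;> simp [h]
    · intro b _ hb
      have hv : ((i0 : ℕ) + 1) ≠ (b : ℕ) := fun h => hb (Fin.ext (by simp [Fin.val_succ, ← h]))
      simp [jordanBlockZero, hv]
    · intro hb
      exact absurd (Finset.mem_univ _) hb
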